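/- Let ψ = ψ_1 ⊗ ψ_2 be a nonzero state vector for a bipartite system, where ψ_j is an n_j-qubit state vector for j = 1,2. Let B' = T'_{j_1} ∪ ⋯ ∪ T'_{j_m} be a union of triples of ψ_1 (so 1 ≤ j_1 < ⋯ < j_m ≤ n_1), and let B = T_{j_1} ∪ ⋯ ∪ T_{j_m} be the corresponding union of triples of ψ. Then dim_ℝ⟨B'⟩ = dim_ℝ⟨B⟩. -/
import Mathlib


/-- An `n`-qubit state vector, identified with its coefficient function. -/
abbrev QState (n : ℕ) := (Fin n → Fin 2) → ℂ

/-- Complement the `k`-th bit of a multi-index. -/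
def flipBit {n : ℕ} (k : Fin n) (I : Fin n → Fin 2) : Fin n → Fin 2 :=
  Function.update I k (1 - I k)

/-- `(A_k ψ)(I) = i (−1)^{i_k} c_I`. -/
def Aop {n : ℕ} (k : Fin n) (ψ : QState n) : QState n :=
  fun I => Complex.I * (-1 : ℂ) ^ ((I k : ℕ)) * ψ I

/-- `(B_k ψ)(I) = (−1)^{i_k} c_{I_k}`. -/
def Bop {n : ℕ} (k : Fin n) (ψ : QState n) : QState n :=
  fun I => (-1 : ℂ) ^ ((I k : ℕ)) * ψ (flipBit k I)

/-- `(C_k ψ)(I) = i c_{I_k}`. -/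
def Cop {n : ℕ} (k : Fin n) (ψ : QState n) : QState n :=
  fun I => Complex.I * ψ (flipBit k I)

/-- The triple `T_k = {A_k ψ, B_k ψ, C_k ψ}`. -/
def triple {n : ℕ} (k : Fin n) (ψ : QState n) : Set (QState n) :=
  {Aop k ψ, Bop k ψ, Cop k ψ}

/-- Real inner product: the real part of the Hermitian inner product. -/
def rdot {n : ℕ} (φ ψ : QState n) : ℝ :=
  ∑ I : Fin n → Fin 2, ((starRingEnd ℂ) (φ I) * ψ I).re

/-- Real dimension of the span of a set of vectors. -/
noncomputable def rdim {n : ℕ} (S : Set (QState n)) : ℕ :=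
  Module.finrank ℝ (Submodule.span ℝ S)

/-- The set of columns of the matrix `M` associated to `ψ`. -/
def columns {n : ℕ} (ψ : QState n) : Set (QState n) :=
  (⋃ k : Fin n, triple k ψ) ∪ {(-Complex.I) • ψ}

/-- `rank_ℝ M`: the real dimension of the span of the columns of `M`. -/
noncomputable def rankM {n : ℕ} (ψ : QState n) : ℕ := rdim (columns ψ)

/-- The action of `(U_1, …, U_n) ∈ SU(2)^n` on an `n`-qubit state,
`U_1 ⊗ ⋯ ⊗ U_n`. -/
noncomputable def actLU {n : ℕ} (U : ∀ _ : Fin n, Matrix.specialUnitaryGroup (Fin 2) ℂ)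
    (ψ : QState n) : QState n :=
  fun I => ∑ J : Fin n → Fin 2, (∏ k : Fin n, (U k : Matrix (Fin 2) (Fin 2) ℂ) (I k) (J k)) * ψ J

/-- Local unitary equivalence of two state vectors. -/
def LUEquiv {n : ℕ} (ψ ψ' : QState n) : Prop :=
  ∃ U : ∀ _ : Fin n, Matrix.specialUnitaryGroup (Fin 2) ℂ, actLU U ψ = ψ'

/-- Tensor product of coefficient functions. -/
def tensorState {n₁ n₂ : ℕ} (ψ₁ : QState n₁) (ψ₂ : QState n₂) : QState (n₁ + n₂) :=
  fun I => ψ₁ (fun k => I (Fin.castAdd n₂ k)) * ψ₂ (fun k => I (Fin.natAdd n₁ k))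

/-- A perfect matching of the `n` qubits, encoded as an involution with no fixed
point when `n` is even and exactly one fixed point (the leftover qubit) when `n`
is odd. -/
def IsMatching {n : ℕ} (m : Fin n → Fin n) : Prop :=
  Function.Involutive m ∧ (Finset.univ.filter fun k => m k = k).card = n % 2

/-- The singlet product for a matching `m`: the tensor product over matched pairs
of `|00⟩ + |11⟩`, times the single-qubit vector `χ` in the leftover qubit when `n`
is odd. -/
def singletProduct {n : ℕ} (m : Fin n → Fin n) (χ : Fin 2 → ℂ) : QState n :=
  fun I => (∏ k : Fin n, if I k = I (m k) then (1 : ℂ) else 0) *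
    ∏ k ∈ Finset.univ.filter (fun k => m k = k), χ (I k)

/-- The minimum possible rank of `M`: `3n/2 + 1` for even `n`, `(3n+1)/2 + 1` for odd `n`. -/
def minRank (n : ℕ) : ℕ := if Even n then 3 * n / 2 + 1 else (3 * n + 1) / 2 + 1
/-- Tensoring with a fixed `ψ₂` as a real-linear map. -/
def tensorL {n₁ n₂ : ℕ} (ψ₂ : QState n₂) : QState n₁ →ₗ[ℝ] QState (n₁ + n₂) where
  toFun φ := tensorState φ ψ₂
  map_add' φ φ' := by funext I; simp [tensorState, add_mul]
  map_smul' r φ := by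
    funext I
    simp [tensorState, Complex.real_smul]
    ring

lemma tensorL_injective {n₁ n₂ : ℕ} (ψ₂ : QState n₂) (h : ψ₂ ≠ 0) :
    Function.Injective (tensorL (n₁ := n₁) ψ₂) := by
  rw [← LinearMap.ker_eq_bot]
  rw [Submodule.eq_bot_iff]
  intro φ hφ
  obtain ⟨Jx, hJ⟩ : ∃ Jx, ψ₂ Jx ≠ 0 := by
    by_contra hc
    push_neg at hc
    exact h (funext hc)
  funext I
  have h2 : tensorState φ ψ₂ (Fin.addCases (fun k => I k) (fun k => Jx k)) = 0 := by
    exact congrFun hφ _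
  simp only [tensorState] at h2
  have hI : (fun k => Fin.addCases (motive := fun _ => Fin 2) (fun k => I k) (fun k => Jx k)
      (Fin.castAdd n₂ k)) = I := by
    funext k; simp
  have hJx : (fun k => Fin.addCases (motive := fun _ => Fin 2) (fun k => I k) (fun k => Jx k)
      (Fin.natAdd n₁ k)) = Jx := by
    funext k; simp
  rw [hI, hJx] at h2
  rcases mul_eq_zero.mp h2 with h3 | h3
  · exact h3
  · exact absurd h3 hJ

lemma flip_castAdd_comp₁ {n₁ n₂ : ℕ} (k : Fin n₁) (I : Fin (n₁ + n₂) → Fin 2) :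
    (fun j => flipBit (Fin.castAdd n₂ k) I (Fin.castAdd n₂ j)) =
      flipBit k (fun j => I (Fin.castAdd n₂ j)) := by
  funext j
  simp only [flipBit, Function.update_apply]
  by_cases hjk : j = k
  · simp [hjk]
  · have : ¬ (Fin.castAdd n₂ j = Fin.castAdd n₂ k) := by
      intro h
      have h2 := congrArg Fin.val h
      simp at h2
      exact hjk (Fin.ext h2)
    simp [hjk, this]

lemma flip_castAdd_comp₂ {n₁ n₂ : ℕ} (k : Fin n₁) (I : Fin (n₁ + n₂) → Fin 2) :
    (fun j => flipBit (Fin.castAdd n₂ k) I (Fin.natAdd n₁ j)) =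
      fun j => I (Fin.natAdd n₁ j) := by
  funext j
  simp only [flipBit, Function.update_apply]
  have : ¬ (Fin.natAdd n₁ j = Fin.castAdd n₂ k) := by
    intro h
    have := congrArg Fin.val h
    simp at this
    omega
  simp [this]

lemma tensorL_Aop {n₁ n₂ : ℕ} (k : Fin n₁) (ψ₁ : QState n₁) (ψ₂ : QState n₂) :
    tensorL ψ₂ (Aop k ψ₁) = Aop (Fin.castAdd n₂ k) (tensorState ψ₁ ψ₂) := by
  funext I
  simp [tensorL, tensorState, Aop]
  ring

lemma tensorL_Bop {n₁ n₂ : ℕ} (k : Fin n₁) (ψ₁ : QState n₁) (ψ₂ : QState n₂) :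
    tensorL ψ₂ (Bop k ψ₁) = Bop (Fin.castAdd n₂ k) (tensorState ψ₁ ψ₂) := by
  funext I
  simp [tensorL, tensorState, Bop, flip_castAdd_comp₁, flip_castAdd_comp₂]
  ring

lemma tensorL_Cop {n₁ n₂ : ℕ} (k : Fin n₁) (ψ₁ : QState n₁) (ψ₂ : QState n₂) :
    tensorL ψ₂ (Cop k ψ₁) = Cop (Fin.castAdd n₂ k) (tensorState ψ₁ ψ₂) := by
  funext I
  simp [tensorL, tensorState, Cop, flip_castAdd_comp₁, flip_castAdd_comp₂]
  ring

/-- For a nonzero bipartite product state `ψ = ψ₁ ⊗ ψ₂`, a union of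
triples of `ψ₁` has the same span dimension as the corresponding union of triples
of `ψ`. -/
theorem bipartite_triple_span_eq {n₁ n₂ : ℕ} (ψ₁ : QState n₁) (ψ₂ : QState n₂)
    (hψ : tensorState ψ₁ ψ₂ ≠ 0) (J : Set (Fin n₁)) :
    rdim (⋃ k ∈ J, triple k ψ₁) =
      rdim (⋃ k ∈ J, triple (Fin.castAdd n₂ k) (tensorState ψ₁ ψ₂)) := by
  have hψ₂ : ψ₂ ≠ 0 := by
    intro h
    apply hψ
    funext I
    simp [tensorState, h]
  have himg : (tensorL (n₁ := n₁) ψ₂) '' (⋃ k ∈ J, triple k ψ₁) =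
      ⋃ k ∈ J, triple (Fin.castAdd n₂ k) (tensorState ψ₁ ψ₂) := by
    rw [Set.image_iUnion₂]
    refine Set.iUnion₂_congr fun k _ => ?_
    simp only [triple, Set.image_insert_eq, Set.image_singleton,
      tensorL_Aop, tensorL_Bop, tensorL_Cop]
  rw [rdim, rdim, ← himg, ← Submodule.map_span]
  exact (Submodule.equivMapOfInjective _ (tensorL_injective ψ₂ hψ₂) _).finrank_eq
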